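/- Let M be a set (or topological space) with an action of the circle group (the group of unit complex numbers), and let S³ = {(z₁, z₂) ∈ ℂ² : |z₁|² + |z₂|² = 1}. Form the quotient Q = (M × S³)/∼ of M × S³ by the circle action τ · (m, (z₁, z₂)) = (τ·m, (τ·z₁, τ·z₂)). Then the formula ζ · [m, (z₁, z₂)] = [ζ·m, (z₁, ζ·z₂)] descends to a well-defined action of the circle group on Q, and a class [m, (z₁, z₂)] is a fixed point of this action if and only if z₁ = 0, or (z₂ = 0 and m is a fixed point of the action on M). -/

import Mathlib

/-- The unit sphere `S³ ⊆ ℂ²`. -/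
def SphereS3 : Type := {z : ℂ × ℂ // ‖z.1‖ ^ 2 + ‖z.2‖ ^ 2 = 1}

/-- Two points of `M × S³` are related iff they differ by the diagonal circle
action `τ · (m, (z₁, z₂)) = (τ·m, (τ·z₁, τ·z₂))` (the Hopf action on `S³`). -/
def hopfRel (M : Type*) [SMul Circle M] (a b : M × SphereS3) : Prop :=
  ∃ τ : Circle, b.1 = τ • a.1 ∧ b.2.val.1 = (τ : ℂ) * a.2.val.1 ∧
    b.2.val.2 = (τ : ℂ) * a.2.val.2

/-- The quotient `Q = (M × S³)/∼`, i.e. `M ×_{S¹} S³`. -/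
def HopfQuot (M : Type*) [SMul Circle M] : Type _ := Quot (hopfRel M)

/-- The class of `(m, (z₁, z₂))` in `M ×_{S¹} S³`. -/
def hopfMk (M : Type*) [SMul Circle M] (m : M) (z₁ z₂ : ℂ)
    (h : ‖z₁‖ ^ 2 + ‖z₂‖ ^ 2 = 1) : HopfQuot M :=
  Quot.mk (hopfRel M) (m, ⟨(z₁, z₂), h⟩)

section Aux

variable {M : Type*} [MulAction Circle M]

lemma hopfRel_equiv : Equivalence (hopfRel M) := by
  constructor
  · intro a; exact ⟨1, by simp, by simp, by simp⟩
  · rintro a b ⟨τ, h1, h2, h3⟩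
    refine ⟨τ⁻¹, ?_, ?_, ?_⟩
    · rw [h1, ← mul_smul, inv_mul_cancel, one_smul]
    · rw [h2, ← mul_assoc]; push_cast
      rw [inv_mul_cancel₀ (Circle.coe_ne_zero τ), one_mul]
    · rw [h3, ← mul_assoc]; push_cast
      rw [inv_mul_cancel₀ (Circle.coe_ne_zero τ), one_mul]
  · rintro a b c ⟨τ, h1, h2, h3⟩ ⟨σ, g1, g2, g3⟩
    refine ⟨σ * τ, ?_, ?_, ?_⟩
    · rw [g1, h1, mul_smul]
    · rw [g2, h2, ← mul_assoc]; push_cast; ring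
    · rw [g3, h3, ← mul_assoc]; push_cast; ring

/-- The underlying map `(m, (z₁, z₂)) ↦ (ζ·m, (z₁, ζ·z₂))`. -/
def actFun (ζ : Circle) (p : M × SphereS3) : M × SphereS3 :=
  (ζ • p.1, ⟨(p.2.val.1, (ζ : ℂ) * p.2.val.2), by
    have := p.2.property
    simpa [map_mul, Circle.norm_coe] using this⟩)

lemma actFun_resp (ζ : Circle) (a b : M × SphereS3) (hab : hopfRel M a b) :
    hopfRel M (actFun ζ a) (actFun ζ b) := by
  obtain ⟨τ, h1, h2, h3⟩ := hab
  refine ⟨τ, ?_, ?_, ?_⟩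
  · show ζ • b.1 = τ • (ζ • a.1)
    rw [h1, ← mul_smul, ← mul_smul, mul_comm]
  · exact h2
  · show (ζ : ℂ) * b.2.val.2 = (τ : ℂ) * ((ζ : ℂ) * a.2.val.2)
    rw [h3]; ring

/-- The descended action on the quotient. -/
def hopfAct (ζ : Circle) : HopfQuot M → HopfQuot M :=
  Quot.map (actFun ζ) (actFun_resp ζ)

lemma hopfAct_mk (ζ : Circle) (p : M × SphereS3) :
    hopfAct ζ (Quot.mk (hopfRel M) p) = Quot.mk (hopfRel M) (actFun ζ p) := rfl

lemma quot_mk_eq_iff (a b : M × SphereS3) :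
    Quot.mk (hopfRel M) a = Quot.mk (hopfRel M) b ↔ hopfRel M a b := by
  rw [Quot.eq, hopfRel_equiv.eqvGen_iff]

end Aux

/-- The formula `ζ · [m, (z₁, z₂)] = [ζ·m, (z₁, ζ·z₂)]` descends to a
well-defined circle action on `Q = M ×_{S¹} S³`, and a class `[m, (z₁, z₂)]` is
fixed by this action iff `z₁ = 0`, or (`z₂ = 0` and `m` is fixed). -/
theorem gammaM_action_fixed_points (M : Type*) [MulAction Circle M] :
    ∃ act : Circle → HopfQuot M → HopfQuot M,
      (∀ q, act 1 q = q) ∧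
      (∀ (ζ ξ : Circle) q, act (ζ * ξ) q = act ζ (act ξ q)) ∧
      (∀ (ζ : Circle) (m : M) (z₁ z₂ : ℂ)
          (h : ‖z₁‖ ^ 2 + ‖z₂‖ ^ 2 = 1)
          (h' : ‖z₁‖ ^ 2 + ‖(ζ : ℂ) * z₂‖ ^ 2 = 1),
        act ζ (hopfMk M m z₁ z₂ h) = hopfMk M (ζ • m) z₁ ((ζ : ℂ) * z₂) h') ∧
      (∀ (m : M) (z₁ z₂ : ℂ)
          (h : ‖z₁‖ ^ 2 + ‖z₂‖ ^ 2 = 1),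
        (∀ ζ : Circle, act ζ (hopfMk M m z₁ z₂ h) = hopfMk M m z₁ z₂ h) ↔
          (z₁ = 0 ∨ (z₂ = 0 ∧ ∀ τ : Circle, τ • m = m))) := by
  refine ⟨hopfAct, ?_, ?_, ?_, ?_⟩
  · intro q
    induction q using Quot.ind with
    | _ p =>
      rw [hopfAct_mk]; apply (quot_mk_eq_iff _ _).2
      exact ⟨1, by simp [actFun], by simp [actFun], by simp [actFun]⟩
  · intro ζ ξ q
    induction q using Quot.ind with
    | _ p =>
      rw [hopfAct_mk, hopfAct_mk, hopfAct_mk]; apply (quot_mk_eq_iff _ _).2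
      refine ⟨1, ?_, ?_, ?_⟩
      · show ζ • ξ • p.1 = (1 : Circle) • ((ζ * ξ) • p.1)
        rw [one_smul, mul_smul]
      · simp [actFun]
      · show (ζ : ℂ) * ((ξ : ℂ) * p.2.val.2) = 1 * ((↑(ζ * ξ) : ℂ) * p.2.val.2)
        push_cast; ring
  · intro ζ m z₁ z₂ h h'
    rw [hopfMk, hopfAct_mk, hopfMk]; apply (quot_mk_eq_iff _ _).2
    exact ⟨1, by simp [actFun], by simp [actFun], by simp [actFun]⟩
  · intro m z₁ z₂ h
    constructor
    · intro hfix
      by_cases hz₁ : z₁ = 0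
      · exact Or.inl hz₁
      right
      have key : ∀ ζ : Circle, ζ • m = m ∧ z₂ = (ζ : ℂ) * z₂ := by
        intro ζ
        have := hfix ζ
        rw [hopfMk, hopfAct_mk] at this; replace this := (quot_mk_eq_iff _ _).1 this
        obtain ⟨τ, h1, h2, h3⟩ := this
        have hτ : (τ : ℂ) = 1 := by
          have h2' : z₁ = (τ : ℂ) * z₁ := h2
          have : (τ : ℂ) * z₁ = 1 * z₁ := by rw [← h2', one_mul]
          exact mul_right_cancel₀ hz₁ this
        have hτ1 : τ = 1 := by ext; exact hτ
        constructor
        · have : m = τ • ζ • m := h1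
          rw [hτ1, one_smul] at this; exact this.symm
        · have : z₂ = (τ : ℂ) * ((ζ : ℂ) * z₂) := h3
          rw [hτ, one_mul] at this; exact this
      have hneg : (-1 : ℂ) ∈ Submonoid.unitSphere ℂ := by
        simp [Submonoid.unitSphere]
      have h2 := (key ⟨-1, hneg⟩).2
      have hz₂ : z₂ = 0 := by
        have : z₂ = -z₂ := by simpa using h2
        linear_combination this / 2
      exact ⟨hz₂, fun τ => (key τ).1⟩
    · rintro (hz₁ | ⟨hz₂, hm⟩) ζ
      · subst hz₁
        rw [hopfMk, hopfAct_mk]; apply (quot_mk_eq_iff _ _).2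
        refine ⟨ζ⁻¹, ?_, ?_, ?_⟩
        · show m = ζ⁻¹ • ζ • m
          rw [← mul_smul, inv_mul_cancel, one_smul]
        · show (0 : ℂ) = (↑ζ⁻¹ : ℂ) * 0
          ring
        · show z₂ = (↑ζ⁻¹ : ℂ) * ((ζ : ℂ) * z₂)
          rw [← mul_assoc]; push_cast
          rw [inv_mul_cancel₀ (Circle.coe_ne_zero ζ), one_mul]
      · subst hz₂
        rw [hopfMk, hopfAct_mk]; apply (quot_mk_eq_iff _ _).2
        refine ⟨1, ?_, ?_, ?_⟩
        · show m = (1 : Circle) • ζ • m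
          rw [one_smul, hm]
        · show z₁ = (1 : ℂ) * z₁
          ring
        · show (0 : ℂ) = (1 : ℂ) * ((ζ : ℂ) * 0)
          ring
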